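/- Let S be a graph and v a vertex of S, and let J be the graph on vertices {u, v} (u ∉ V(S)) with the single edge {u,v}. If minrk_q(S − v) = minrk_q(S), then minrk_q(S ∪ J) = minrk_q(S) + 1. -/

import Mathlib

open scoped Classical

/-- A matrix `M` fits the graph `G` if its diagonal entries are nonzero and its
entries at distinct non-adjacent pairs of vertices are zero. -/
def Fits {V F : Type} [Fintype V] [Field F]
    (G : SimpleGraph V) (M : Matrix V V F) : Prop :=
  (∀ u, M u u ≠ 0) ∧ ∀ u v, u ≠ v → ¬ G.Adj u v → M u v = 0

/-- The min-rank of `G` over the field `F`: the minimum rank of a matrix fitting `G`. -/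
noncomputable def minrk (F : Type) [Field F] {V : Type} [Fintype V]
    (G : SimpleGraph V) : ℕ :=
  sInf {r : ℕ | ∃ M : Matrix V V F, Fits G M ∧ M.rank = r}

section Aux

variable {F : Type} [Field F]

/-- Rank of an arbitrary submatrix is at most the rank. -/
lemma aux_rank_submatrix_le {m n : Type} [Fintype m] [Fintype n]
    (A : Matrix m m F) (f g : n → m) : (A.submatrix f g).rank ≤ A.rank := by
  classical
  have h : A.submatrix f g =
      (Matrix.of fun i k => if k = f i then (1 : F) else 0) * A *
        Matrix.of fun k j => if k = g j then (1 : F) else 0 := by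
    ext i j
    simp [Matrix.mul_apply, ite_mul, mul_ite, one_mul, mul_one, zero_mul, mul_zero,
      Finset.sum_ite_eq, Finset.sum_ite_eq']
  rw [h]
  exact le_trans (Matrix.rank_mul_le_left _ _) (Matrix.rank_mul_le_right _ _)

/-- An equiv between a submodule product and the product of submodules. -/
noncomputable def prodSubmoduleEquiv {α β : Type} [AddCommGroup α] [AddCommGroup β]
    [Module F α] [Module F β] (p : Submodule F α) (q : Submodule F β) :
    (p.prod q) ≃ₗ[F] (p × q) where
  toFun x := (⟨x.1.1, x.2.1⟩, ⟨x.1.2, x.2.2⟩)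
  invFun x := ⟨(x.1.1, x.2.1), ⟨x.1.2, x.2.2⟩⟩
  map_add' _ _ := rfl
  map_smul' _ _ := rfl
  left_inv _ := rfl
  right_inv _ := rfl

lemma aux_range_prodMap {α β : Type} [AddCommGroup α] [AddCommGroup β]
    [Module F α] [Module F β] (f : α →ₗ[F] α) (g : β →ₗ[F] β) :
    LinearMap.range (f.prodMap g) = (LinearMap.range f).prod (LinearMap.range g) := by
  ext x
  constructor
  · rintro ⟨⟨a, b⟩, rfl⟩
    exact ⟨⟨a, rfl⟩, ⟨b, rfl⟩⟩
  · rintro ⟨⟨a, ha⟩, ⟨b, hb⟩⟩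
    exact ⟨(a, b), by simp [ha, hb, Prod.ext_iff]⟩

lemma aux_rank_fromBlocks {m n : Type} [Fintype m] [Fintype n]
    (A : Matrix m m F) (D : Matrix n n F) :
    (Matrix.fromBlocks A 0 0 D).rank = A.rank + D.rank := by
  classical
  set e := LinearEquiv.sumArrowLequivProdArrow m n F F with he
  have key : (Matrix.fromBlocks A 0 0 D).mulVecLin =
      e.symm.toLinearMap.comp ((A.mulVecLin.prodMap D.mulVecLin).comp e.toLinearMap) := by
    refine LinearMap.ext fun x => ?_
    funext i
    cases i with
    | inl a =>
      simp [he, Matrix.mulVecLin_apply, Matrix.fromBlocks_mulVec, Matrix.zero_mulVec,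
        LinearEquiv.sumArrowLequivProdArrow, Matrix.mulVec, dotProduct]
    | inr b =>
      simp [he, Matrix.mulVecLin_apply, Matrix.fromBlocks_mulVec, Matrix.zero_mulVec,
        LinearEquiv.sumArrowLequivProdArrow, Matrix.mulVec, dotProduct]
  rw [Matrix.rank, key, LinearMap.range_comp, LinearMap.range_comp, LinearEquiv.range,
    Submodule.map_top, LinearEquiv.finrank_map_eq, aux_range_prodMap]
  rw [(prodSubmoduleEquiv _ _).finrank_eq, Module.finrank_prod]
  rfl

lemma fits_one {V : Type} [Fintype V] (G : SimpleGraph V) :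
    Fits G (1 : Matrix V V F) :=
  ⟨fun u => by simp, fun a b hab _ => Matrix.one_apply_ne hab⟩

lemma minrk_exists {V : Type} [Fintype V] (G : SimpleGraph V) :
    ∃ M : Matrix V V F, Fits G M ∧ M.rank = minrk F G := by
  have hne : {r : ℕ | ∃ M : Matrix V V F, Fits G M ∧ M.rank = r}.Nonempty :=
    ⟨(1 : Matrix V V F).rank, ⟨1, fits_one G, rfl⟩⟩
  exact Nat.sInf_mem hne

lemma minrk_le_of_fits {V : Type} [Fintype V] {G : SimpleGraph V}
    {M : Matrix V V F} (h : Fits G M) : minrk F G ≤ M.rank :=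
  Nat.sInf_le ⟨M, h, rfl⟩

/-- The equiv between `{u}ᶜ ⊕ Unit` and `V`. -/
noncomputable def sumComplEquiv {V : Type} (u : V) : ({u}ᶜ : Set V) ⊕ Unit ≃ V where
  toFun := Sum.elim Subtype.val fun _ => u
  invFun x := if h : x = u then Sum.inr () else Sum.inl ⟨x, by simp [h]⟩
  left_inv := by
    rintro (⟨x, hx⟩ | ⟨⟩)
    · have hxu : x ≠ u := by simpa using hx
      simp [hxu]
    · simp
  right_inv := by
    intro x
    by_cases h : x = u <;> simp [h]

lemma sumComplEquiv_symm_self {V : Type} (u : V) :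
    (sumComplEquiv u).symm u = Sum.inr () := by
  simp [sumComplEquiv]

lemma sumComplEquiv_symm_ne {V : Type} {u x : V} (h : x ≠ u)
    (hx : x ∈ ({u}ᶜ : Set V)) : (sumComplEquiv u).symm x = Sum.inl ⟨x, hx⟩ :=
  dif_neg h

end Aux

theorem minrk_pendant_edge {V F : Type} [Fintype V] [Field F] [Fintype F]
    (G : SimpleGraph V) (u v : V) (huv : u ≠ v)
    (hadj : G.Adj u v)
    (hpendant : ∀ b, G.Adj u b → b = v)
    (h : minrk F (G.induce (({u}ᶜ : Set V) \ {v})) = minrk F (G.induce ({u}ᶜ : Set V))) :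
    minrk F G = minrk F (G.induce ({u}ᶜ : Set V)) + 1 := by
  classical
  set s : Set V := ({u}ᶜ : Set V) with hs
  set S := G.induce s with hS
  -- Upper bound
  have hup : minrk F G ≤ minrk F S + 1 := by
    obtain ⟨M, hM, hMr⟩ := minrk_exists (F := F) S
    set M' := (Matrix.fromBlocks M 0 0 (1 : Matrix Unit Unit F)).submatrix
      (sumComplEquiv u).symm (sumComplEquiv u).symm with hM'
    have hrank : M'.rank = minrk F S + 1 := by
      rw [hM', Matrix.rank_submatrix, aux_rank_fromBlocks, hMr, Matrix.rank_one]
      simp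
    have hfits : Fits G M' := by
      constructor
      · intro x
        by_cases hx : x = u
        · subst hx
          simp [hM', Matrix.submatrix_apply, sumComplEquiv_symm_self]
        · have hxm : x ∈ s := by simp [hs, hx]
          rw [hM', Matrix.submatrix_apply, sumComplEquiv_symm_ne hx hxm]
          simpa using hM.1 ⟨x, hxm⟩
      · intro x y hxy hnadj
        by_cases hx : x = u <;> by_cases hy : y = u
        · exact absurd (hx.trans hy.symm) hxy
        · subst hx
          have hym : y ∈ s := by simp [hs, hy]
          rw [hM', Matrix.submatrix_apply, sumComplEquiv_symm_self,
            sumComplEquiv_symm_ne hy hym]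
          rfl
        · subst hy
          have hxm : x ∈ s := by simp [hs, hx]
          rw [hM', Matrix.submatrix_apply, sumComplEquiv_symm_self,
            sumComplEquiv_symm_ne hx hxm]
          rfl
        · have hxm : x ∈ s := by simp [hs, hx]
          have hym : y ∈ s := by simp [hs, hy]
          rw [hM', Matrix.submatrix_apply, sumComplEquiv_symm_ne hx hxm,
            sumComplEquiv_symm_ne hy hym]
          refine hM.2 ⟨x, hxm⟩ ⟨y, hym⟩ (fun hc => hxy (congrArg Subtype.val hc)) ?_
          simpa [hS] using hnadj
    calc minrk F G ≤ M'.rank := minrk_le_of_fits hfits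
      _ = minrk F S + 1 := hrank
  -- Lower bound
  have hlow : minrk F S + 1 ≤ minrk F G := by
    obtain ⟨M, hM, hMr⟩ := minrk_exists (F := F) G
    set N : Matrix s s F := M.submatrix (fun x : s => (x : V)) (fun x : s => (x : V)) with hN
    set b : Matrix s Unit F := Matrix.of fun x _ => M x u with hb
    set c : Matrix Unit s F := Matrix.of fun _ y => M u y with hc
    set d : Matrix Unit Unit F := Matrix.of fun _ _ => M u u with hd
    have hA : M.submatrix (sumComplEquiv u) (sumComplEquiv u) = Matrix.fromBlocks N b c d := by
      ext i j
      cases i <;> cases j <;> rfl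
    haveI : Invertible d := Matrix.invertibleOfIsUnitDet d (by
      rw [Matrix.det_unique]
      exact (hM.1 u).isUnit)
    set B := N - b * ⅟d * c with hB
    have hLdet : IsUnit (Matrix.fromBlocks (1 : Matrix s s F) 0 (⅟d * c) 1).det := by
      rw [Matrix.det_fromBlocks_zero₁₂]
      simp
    have hUdet : IsUnit (Matrix.fromBlocks (1 : Matrix s s F) (b * ⅟d) 0 1).det := by
      rw [Matrix.det_fromBlocks_zero₂₁]
      simp
    have hrank : M.rank = B.rank + 1 := by
      have h1 : M.rank = (Matrix.fromBlocks B 0 0 d).rank := by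
        rw [← Matrix.rank_submatrix M (sumComplEquiv u) (sumComplEquiv u), hA,
          Matrix.fromBlocks_eq_of_invertible₂₂ N b c d,
          Matrix.rank_mul_eq_left_of_isUnit_det _ _ hLdet,
          Matrix.rank_mul_eq_right_of_isUnit_det _ _ hUdet]
      rw [h1, aux_rank_fromBlocks]
      congr 1
      rw [Matrix.rank_of_isUnit d (isUnit_of_invertible d)]
      rfl
    -- the submatrix avoiding v
    set f : (s \ {v} : Set V) → s := fun x => ⟨x.1, x.2.1⟩ with hf
    set C := B.submatrix f f with hC
    have hCeq : ∀ x y : (s \ {v} : Set V), C x y = M x.1 y.1 := by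
      intro x y
      have hxu : x.1 ≠ u := by simpa [hs] using x.2.1
      have hxv : x.1 ≠ v := by simpa using x.2.2
      have hbx : ∀ k : Unit, b (f x) k = 0 := by
        intro _
        refine hM.2 x.1 u hxu fun hadj' => hxv (hpendant x.1 hadj'.symm)
      have hz : (b * ⅟d * c) (f x) (f y) = 0 := by
        rw [Matrix.mul_apply]
        refine Finset.sum_eq_zero fun j _ => ?_
        have hzz : (b * ⅟d) (f x) j = 0 := by
          rw [Matrix.mul_apply]
          exact Finset.sum_eq_zero fun k _ => by rw [hbx, zero_mul]
        rw [hzz, zero_mul]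
      rw [hC, Matrix.submatrix_apply, hB, Matrix.sub_apply, hz, sub_zero, hN,
        Matrix.submatrix_apply]
    have hfitsC : Fits (G.induce (s \ {v} : Set V)) C := by
      constructor
      · intro x
        rw [hCeq]
        exact hM.1 _
      · intro x y hxy hnadj
        rw [hCeq]
        refine hM.2 x.1 y.1 (fun hc => hxy (Subtype.ext hc)) ?_
        simpa using hnadj
    have h1 : minrk F (G.induce (s \ {v} : Set V)) ≤ C.rank := minrk_le_of_fits hfitsC
    have h2 : C.rank ≤ B.rank := aux_rank_submatrix_le B f f
    have h3 : minrk F S = minrk F (G.induce (s \ {v} : Set V)) := h.symm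
    omega
  omega
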